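/- Fix (x₁,x₂) and suppose b¹(ρ), b²(ρ) are C² functions and f¹(ρ₋,ρ₊), f²(ρ₋,ρ₊) are C² kernels compactly supported in {ρ₋ ≤ ρ₊}. Define the adjoint operators A^{i*}ℓ := ℓ∗fⁱ − A(fⁱ)ℓ − (bⁱℓ)_ρ acting on C² compactly supported densities ℓ(ρ). Then the commutator satisfies the identity: A^{1*}A^{2*}ℓ − A^{2*}A^{1*}ℓ = ℓ∗[Q(f²,f¹) − Q(f¹,f²)] + [(b¹b²_ρ − b²b¹_ρ)ℓ]_ρ + ℓ·[A(f²)_ρ·b¹ − A(f¹)_ρ·b²]. -/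

import Mathlib

open MeasureTheory Set

/-- `A(k)(ρ₋) = ∫_{ρ₋}^∞ k(ρ₋,ρ₊) dρ₊`. -/
noncomputable def Aop (k : ℝ → ℝ → ℝ) (ρ : ℝ) : ℝ := ∫ rp in Ioi ρ, k ρ rp

/-- `(ℓ∗k)(ρ) = ∫ ℓ(ρ★) k(ρ★,ρ) dρ★`. -/
noncomputable def convL (ℓ : ℝ → ℝ) (k : ℝ → ℝ → ℝ) (ρ : ℝ) : ℝ :=
  ∫ rs, ℓ rs * k rs ρ

/-- `(k∗m)(ρ₋,ρ₊) = ∫ k(ρ₋,ρ★) m(ρ★,ρ₊) dρ★`. -/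
noncomputable def convK (k m : ℝ → ℝ → ℝ) (rm rp : ℝ) : ℝ :=
  ∫ rs, k rm rs * m rs rp

/-- `Q(f^j,f^i) = f^j∗f^i − A(f^j)⊗f^i − f^j⊗A(f^i) + b^j⊗f^i_{ρ₋} − (f^j⊗b^i)_{ρ₊}`. -/
noncomputable def Qop (bj : ℝ → ℝ) (fj : ℝ → ℝ → ℝ) (bi : ℝ → ℝ) (fi : ℝ → ℝ → ℝ)
    (rm rp : ℝ) : ℝ :=
  convK fj fi rm rp - Aop fj rm * fi rm rp - fj rm rp * Aop fi rp
    + bj rm * deriv (fun r => fi r rp) rm - deriv (fun r => fj rm r * bi r) rp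

/-- The adjoint generator `A* ℓ = ℓ∗f − A(f)ℓ − (bℓ)_ρ`. -/
noncomputable def Astar (b : ℝ → ℝ) (f : ℝ → ℝ → ℝ) (ℓ : ℝ → ℝ) (ρ : ℝ) : ℝ :=
  convL ℓ f ρ - Aop f ρ * ℓ ρ - deriv (fun r => b r * ℓ r) ρ

namespace Stmt15Aux

noncomputable def pd1 (F : ℝ → ℝ → ℝ) (s ρ : ℝ) : ℝ := deriv (fun r => F r ρ) s
noncomputable def pd2 (F : ℝ → ℝ → ℝ) (s ρ : ℝ) : ℝ := deriv (fun r => F s r) ρ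

variable {F : ℝ → ℝ → ℝ}

lemma sect2_hasDerivAt (hF : ContDiff ℝ 1 fun p : ℝ × ℝ => F p.1 p.2) (s ρ : ℝ) :
    HasDerivAt (fun r => F s r) (pd2 F s ρ) ρ := by
  have hp : HasDerivAt (fun r : ℝ => ((s, r) : ℝ × ℝ)) ((0 : ℝ), (1 : ℝ)) ρ :=
    (hasDerivAt_const ρ s).prodMk (hasDerivAt_id ρ)
  have h : HasDerivAt (fun r => F s r)
      (fderiv ℝ (fun p : ℝ × ℝ => F p.1 p.2) (s, ρ) ((0 : ℝ), (1 : ℝ))) ρ :=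
    ((hF.differentiable one_ne_zero) (s, ρ)).hasFDerivAt.comp_hasDerivAt ρ hp
  show HasDerivAt _ (deriv (fun r => F s r) ρ) ρ
  rw [h.deriv]; exact h

lemma sect1_hasDerivAt (hF : ContDiff ℝ 1 fun p : ℝ × ℝ => F p.1 p.2) (s ρ : ℝ) :
    HasDerivAt (fun r => F r ρ) (pd1 F s ρ) s := by
  have hp : HasDerivAt (fun r : ℝ => ((r, ρ) : ℝ × ℝ)) ((1 : ℝ), (0 : ℝ)) s :=
    (hasDerivAt_id s).prodMk (hasDerivAt_const s ρ)
  have h : HasDerivAt (fun r => F r ρ)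
      (fderiv ℝ (fun p : ℝ × ℝ => F p.1 p.2) (s, ρ) ((1 : ℝ), (0 : ℝ))) s :=
    by have := ((hF.differentiable one_ne_zero) (s, ρ)).hasFDerivAt.comp_hasDerivAt s hp; exact this
  show HasDerivAt _ (deriv (fun r => F r ρ) s) s
  rw [h.deriv]; exact h

lemma pd2_eq_fderiv (hF : ContDiff ℝ 1 fun p : ℝ × ℝ => F p.1 p.2) :
    (fun p : ℝ × ℝ => pd2 F p.1 p.2)
      = fun p : ℝ × ℝ => fderiv ℝ (fun p : ℝ × ℝ => F p.1 p.2) p ((0 : ℝ), (1 : ℝ)) := by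
  funext p
  have hp : HasDerivAt (fun r : ℝ => ((p.1, r) : ℝ × ℝ)) ((0 : ℝ), (1 : ℝ)) p.2 :=
    (hasDerivAt_const p.2 p.1).prodMk (hasDerivAt_id p.2)
  have h : HasDerivAt (fun r => F p.1 r)
      (fderiv ℝ (fun p : ℝ × ℝ => F p.1 p.2) p ((0 : ℝ), (1 : ℝ))) p.2 :=
    by have := ((hF.differentiable one_ne_zero) p).hasFDerivAt.comp_hasDerivAt p.2 hp; exact this
  exact h.deriv

lemma pd1_eq_fderiv (hF : ContDiff ℝ 1 fun p : ℝ × ℝ => F p.1 p.2) :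
    (fun p : ℝ × ℝ => pd1 F p.1 p.2)
      = fun p : ℝ × ℝ => fderiv ℝ (fun p : ℝ × ℝ => F p.1 p.2) p ((1 : ℝ), (0 : ℝ)) := by
  funext p
  have hp : HasDerivAt (fun r : ℝ => ((r, p.2) : ℝ × ℝ)) ((1 : ℝ), (0 : ℝ)) p.1 :=
    (hasDerivAt_id p.1).prodMk (hasDerivAt_const p.1 p.2)
  have h : HasDerivAt (fun r => F r p.2)
      (fderiv ℝ (fun p : ℝ × ℝ => F p.1 p.2) p ((1 : ℝ), (0 : ℝ))) p.1 :=
    by have := ((hF.differentiable one_ne_zero) p).hasFDerivAt.comp_hasDerivAt p.1 hp; exact this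
  exact h.deriv

lemma fderiv_apply_cont (hF : ContDiff ℝ 1 fun p : ℝ × ℝ => F p.1 p.2) (v : ℝ × ℝ) :
    Continuous fun p : ℝ × ℝ => fderiv ℝ (fun p : ℝ × ℝ => F p.1 p.2) p v :=
  ((hF.fderiv_right (m := 0) (by norm_num)).continuous).clm_apply continuous_const

lemma pd2_cont (hF : ContDiff ℝ 1 fun p : ℝ × ℝ => F p.1 p.2) :
    Continuous fun p : ℝ × ℝ => pd2 F p.1 p.2 := by
  rw [pd2_eq_fderiv hF]; exact fderiv_apply_cont hF _

lemma pd1_cont (hF : ContDiff ℝ 1 fun p : ℝ × ℝ => F p.1 p.2) :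
    Continuous fun p : ℝ × ℝ => pd1 F p.1 p.2 := by
  rw [pd1_eq_fderiv hF]; exact fderiv_apply_cont hF _

lemma pd2_hcs (hF : ContDiff ℝ 1 fun p : ℝ × ℝ => F p.1 p.2)
    (hFs : HasCompactSupport fun p : ℝ × ℝ => F p.1 p.2) :
    HasCompactSupport fun p : ℝ × ℝ => pd2 F p.1 p.2 := by
  rw [pd2_eq_fderiv hF]
  exact (hFs.fderiv ℝ).comp_left (g := fun L : ℝ × ℝ →L[ℝ] ℝ => L ((0 : ℝ), (1 : ℝ))) rfl

lemma pd1_hcs (hF : ContDiff ℝ 1 fun p : ℝ × ℝ => F p.1 p.2)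
    (hFs : HasCompactSupport fun p : ℝ × ℝ => F p.1 p.2) :
    HasCompactSupport fun p : ℝ × ℝ => pd1 F p.1 p.2 := by
  rw [pd1_eq_fderiv hF]
  exact (hFs.fderiv ℝ).comp_left (g := fun L : ℝ × ℝ →L[ℝ] ℝ => L ((1 : ℝ), (0 : ℝ))) rfl

lemma closedEmb_mk_left (ρ : ℝ) : Topology.IsClosedEmbedding (fun s : ℝ => ((s, ρ) : ℝ × ℝ)) := by
  have : Isometry (fun s : ℝ => ((s, ρ) : ℝ × ℝ)) := by
    intro x y
    simp [Prod.edist_eq, edist_self]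
  exact this.isClosedEmbedding

lemma closedEmb_mk_right (s : ℝ) : Topology.IsClosedEmbedding (fun ρ : ℝ => ((s, ρ) : ℝ × ℝ)) := by
  have : Isometry (fun ρ : ℝ => ((s, ρ) : ℝ × ℝ)) := by
    intro x y
    simp [Prod.edist_eq, edist_self]
  exact this.isClosedEmbedding

lemma sect1_hcs {G : ℝ × ℝ → ℝ} (hGs : HasCompactSupport G) (ρ : ℝ) :
    HasCompactSupport fun s => G (s, ρ) :=
  hGs.comp_isClosedEmbedding (closedEmb_mk_left ρ)

lemma sect2_hcs {G : ℝ × ℝ → ℝ} (hGs : HasCompactSupport G) (s : ℝ) :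
    HasCompactSupport fun ρ => G (s, ρ) :=
  hGs.comp_isClosedEmbedding (closedEmb_mk_right s)

lemma sect1_cont {G : ℝ × ℝ → ℝ} (hG : Continuous G) (ρ : ℝ) :
    Continuous fun s => G (s, ρ) := hG.comp (continuous_id.prodMk continuous_const)

lemma sect2_cont {G : ℝ × ℝ → ℝ} (hG : Continuous G) (s : ℝ) :
    Continuous fun ρ => G (s, ρ) := hG.comp (continuous_const.prodMk continuous_id)

/-- Differentiation under the integral sign. -/
lemma hasDerivAt_param (hF : ContDiff ℝ 1 fun p : ℝ × ℝ => F p.1 p.2)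
    (hFs : HasCompactSupport fun p : ℝ × ℝ => F p.1 p.2)
    {g : ℝ → ℝ} (hg : Continuous g) (ρ : ℝ) :
    HasDerivAt (fun r => ∫ s, g s * F s r) (∫ s, g s * pd2 F s ρ) ρ := by
  set G : ℝ × ℝ → ℝ := fun p => g p.1 * pd2 F p.1 p.2 with hGdef
  have hGc : Continuous G := (hg.comp continuous_fst).mul (pd2_cont hF)
  have hGs : HasCompactSupport G := HasCompactSupport.mul_left (pd2_hcs hF hFs)
  obtain ⟨C, hC⟩ := hGs.exists_bound_of_continuous hGc
  set K : Set ℝ := Prod.fst '' tsupport G with hKdef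
  have hKc : IsCompact K := hGs.image continuous_fst
  have h1 : ∀ᶠ x in nhds ρ, AEStronglyMeasurable (fun a => g a * F a x) volume :=
    Filter.Eventually.of_forall fun x =>
      ((hg.mul (sect1_cont hF.continuous x)).aestronglyMeasurable)
  have h2 : Integrable (fun a => g a * F a ρ) volume :=
    (hg.mul (sect1_cont hF.continuous ρ)).integrable_of_hasCompactSupport
      (HasCompactSupport.mul_left (sect1_hcs hFs ρ))
  have h3 : AEStronglyMeasurable (fun a => g a * pd2 F a ρ) volume :=
    (hg.mul (sect1_cont (pd2_cont hF) ρ)).aestronglyMeasurable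
  have h4 : ∀ᵐ a : ℝ, ∀ x ∈ Metric.ball ρ 1,
      ‖g a * pd2 F a x‖ ≤ K.indicator (fun _ => C) a := by
    refine Filter.Eventually.of_forall fun a x _ => ?_
    by_cases ha : a ∈ K
    · rw [indicator_of_mem ha]
      exact hC (a, x)
    · have hz : G (a, x) = 0 := by
        apply image_eq_zero_of_notMem_tsupport
        intro hmem
        exact ha ⟨(a, x), hmem, rfl⟩
      rw [indicator_of_notMem ha]
      have : g a * pd2 F a x = 0 := hz
      simp [this]
  have h5 : Integrable (K.indicator fun _ => C) volume :=
    (integrable_indicator_iff hKc.measurableSet).2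
      (integrableOn_const hKc.measure_lt_top.ne)
  have h6 : ∀ᵐ a : ℝ, ∀ x ∈ Metric.ball ρ 1,
      HasDerivAt (fun r => g a * F a r) (g a * pd2 F a x) x :=
    Filter.Eventually.of_forall fun a x _ => (sect2_hasDerivAt hF a x).const_mul (g a)
  exact (hasDerivAt_integral_of_dominated_loc_of_deriv_le (Metric.ball_mem_nhds ρ one_pos) h1 h2 h3 h4 h5 h6).2

lemma swap_contDiff (hF : ContDiff ℝ 1 fun p : ℝ × ℝ => F p.1 p.2) :
    ContDiff ℝ 1 fun p : ℝ × ℝ => F p.2 p.1 :=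
  hF.comp (contDiff_snd.prodMk contDiff_fst)

lemma swap_hcs (hFs : HasCompactSupport fun p : ℝ × ℝ => F p.1 p.2) :
    HasCompactSupport fun p : ℝ × ℝ => F p.2 p.1 :=
  hFs.comp_isClosedEmbedding (Homeomorph.prodComm ℝ ℝ).isClosedEmbedding

/-- Differentiation in the first variable of the full-line integral. -/
lemma hasDerivAt_intfst (hF : ContDiff ℝ 1 fun p : ℝ × ℝ => F p.1 p.2)
    (hFs : HasCompactSupport fun p : ℝ × ℝ => F p.1 p.2) (ρ : ℝ) :
    HasDerivAt (fun r => ∫ s, F r s) (∫ s, pd1 F ρ s) ρ := by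
  have h := hasDerivAt_param (F := fun a b => F b a) (swap_contDiff hF) (swap_hcs hFs)
    (g := fun _ => (1 : ℝ)) continuous_const ρ
  have e1 : (fun r => ∫ s, (1 : ℝ) * F r s) = fun r => ∫ s, F r s := by
    funext r; simp
  have e2 : (∫ s, (1 : ℝ) * pd2 (fun a b => F b a) s ρ) = ∫ s, pd1 F ρ s := by
    simp only [one_mul]; rfl
  rw [e1, e2] at h
  exact h

lemma Aop_eq_integral (hFc : Continuous fun p : ℝ × ℝ => F p.1 p.2)
    (hFs : HasCompactSupport fun p : ℝ × ℝ => F p.1 p.2)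
    (htri : ∀ rm rp, rp < rm → F rm rp = 0) (ρ : ℝ) :
    Aop F ρ = ∫ s, F ρ s := by
  have hi : Integrable (fun s => F ρ s) volume :=
    (sect2_cont hFc ρ).integrable_of_hasCompactSupport (sect2_hcs hFs ρ)
  have h0 : ∫ s in Iic ρ, F ρ s = 0 := by
    rw [integral_Iic_eq_integral_Iio]
    have : EqOn (fun s => F ρ s) (fun _ => (0 : ℝ)) (Iio ρ) := fun s hs => htri ρ s hs
    rw [setIntegral_congr_fun measurableSet_Iio this]
    simp
  have hsplit := intervalIntegral.integral_Iic_add_Ioi (b := ρ) hi.integrableOn hi.integrableOn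
  have : Aop F ρ = ∫ s in Ioi ρ, F ρ s := rfl
  rw [this]
  linarith

/-- Fubini for the double convolution. -/
lemma fubini_conv {f g : ℝ → ℝ → ℝ}
    (hfc : Continuous fun p : ℝ × ℝ => f p.1 p.2)
    (hfs : HasCompactSupport fun p : ℝ × ℝ => f p.1 p.2)
    (hgc : Continuous fun p : ℝ × ℝ => g p.1 p.2)
    {ℓ : ℝ → ℝ} (hℓ : Continuous ℓ) (ρ : ℝ) :
    ∫ s, (∫ t, ℓ t * f t s) * g s ρ = ∫ t, ℓ t * convK f g t ρ := by
  have hint : Integrable (Function.uncurry fun s t => ℓ t * f t s * g s ρ)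
      (volume.prod volume) := by
    rw [← Measure.volume_eq_prod]
    have hc : Continuous fun z : ℝ × ℝ => ℓ z.2 * f z.2 z.1 * g z.1 ρ := by
      fun_prop
    have hcs : HasCompactSupport fun z : ℝ × ℝ => ℓ z.2 * f z.2 z.1 * g z.1 ρ :=
      HasCompactSupport.mul_right (HasCompactSupport.mul_left (swap_hcs hfs))
    exact hc.integrable_of_hasCompactSupport hcs
  calc ∫ s, (∫ t, ℓ t * f t s) * g s ρ
      = ∫ s, ∫ t, ℓ t * f t s * g s ρ := by
        simp_rw [← integral_mul_const]
    _ = ∫ t, ∫ s, ℓ t * f t s * g s ρ := integral_integral_swap hint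
    _ = ∫ t, ℓ t * convK f g t ρ := by
        unfold convK
        congr 1
        funext t
        simp_rw [mul_assoc]
        exact integral_const_mul _ _

/-- Integration by parts. -/
lemma ibp {u : ℝ → ℝ} (hu : ContDiff ℝ 1 u) (hus : HasCompactSupport u)
    (hF : ContDiff ℝ 1 fun p : ℝ × ℝ => F p.1 p.2)
    (hFs : HasCompactSupport fun p : ℝ × ℝ => F p.1 p.2) (ρ : ℝ) :
    ∫ s, deriv u s * F s ρ = - ∫ s, u s * pd1 F s ρ := by
  have hv : ∀ x, HasDerivAt (fun s => F s ρ) (pd1 F x ρ) x := fun x => sect1_hasDerivAt hF x ρ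
  have hu' : ∀ x, HasDerivAt u (deriv u x) x := fun x =>
    ((hu.differentiable one_ne_zero) x).hasDerivAt
  have hFc : Continuous fun s => F s ρ := sect1_cont hF.continuous ρ
  have hF1c : Continuous fun s => pd1 F s ρ := sect1_cont (pd1_cont hF) ρ
  have i1 : Integrable ((fun s => F s ρ) * deriv u) volume :=
    (hFc.mul (hu.continuous_deriv le_rfl)).integrable_of_hasCompactSupport
      (HasCompactSupport.mul_left hus.deriv)
  have i2 : Integrable ((fun s => pd1 F s ρ) * u) volume :=
    (hF1c.mul hu.continuous).integrable_of_hasCompactSupport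
      (HasCompactSupport.mul_left hus)
  have i3 : Integrable ((fun s => F s ρ) * u) volume :=
    (hFc.mul hu.continuous).integrable_of_hasCompactSupport
      (HasCompactSupport.mul_left hus)
  have h := integral_mul_deriv_eq_deriv_mul_of_integrable (fun x _ => hv x) (fun x _ => hu' x) i1 i2 i3
  calc ∫ s, deriv u s * F s ρ = ∫ s, F s ρ * deriv u s := by
        congr 1; funext s; ring
    _ = - ∫ s, pd1 F s ρ * u s := h
    _ = - ∫ s, u s * pd1 F s ρ := by
        congr 1; congr 1; funext s; ring



section Master

variable {ℓ ba bb : ℝ → ℝ} {fa fb : ℝ → ℝ → ℝ}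

lemma contDiff_one_deriv {b : ℝ → ℝ} (hb : ContDiff ℝ 2 b) : ContDiff ℝ 1 (deriv b) := by
  rw [show (2 : WithTop ℕ∞) = 1 + 1 from by norm_num] at hb
  exact (contDiff_succ_iff_deriv.mp hb).2.2

lemma hasDerivAt_convL (hℓc : Continuous ℓ)
    (hfa : ContDiff ℝ 1 fun p : ℝ × ℝ => fa p.1 p.2)
    (hfas : HasCompactSupport fun p : ℝ × ℝ => fa p.1 p.2) (ρ : ℝ) :
    HasDerivAt (fun r => ∫ s, ℓ s * fa s r) (∫ s, ℓ s * pd2 fa s ρ) ρ :=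
  hasDerivAt_param hfa hfas hℓc ρ

lemma hasDerivAt_Aop (hfa : ContDiff ℝ 1 fun p : ℝ × ℝ => fa p.1 p.2)
    (hfas : HasCompactSupport fun p : ℝ × ℝ => fa p.1 p.2)
    (hfat : ∀ rm rp, rp < rm → fa rm rp = 0) (ρ : ℝ) :
    HasDerivAt (Aop fa) (∫ s, pd1 fa ρ s) ρ := by
  have he : Aop fa = fun r => ∫ s, fa r s :=
    funext fun r => Aop_eq_integral hfa.continuous hfas hfat r
  rw [he]
  exact hasDerivAt_intfst hfa hfas ρ

lemma Aop_cont (hfa : ContDiff ℝ 1 fun p : ℝ × ℝ => fa p.1 p.2)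
    (hfas : HasCompactSupport fun p : ℝ × ℝ => fa p.1 p.2)
    (hfat : ∀ rm rp, rp < rm → fa rm rp = 0) :
    Continuous (Aop fa) :=
  Differentiable.continuous fun r => (hasDerivAt_Aop hfa hfas hfat r).differentiableAt

lemma convL_cont (hℓc : Continuous ℓ)
    (hfa : ContDiff ℝ 1 fun p : ℝ × ℝ => fa p.1 p.2)
    (hfas : HasCompactSupport fun p : ℝ × ℝ => fa p.1 p.2) :
    Continuous fun r => ∫ s, ℓ s * fa s r :=
  Differentiable.continuous fun r => (hasDerivAt_convL hℓc hfa hfas r).differentiableAt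

lemma convK_cont (hfa : ContDiff ℝ 1 fun p : ℝ × ℝ => fa p.1 p.2)
    (hfas : HasCompactSupport fun p : ℝ × ℝ => fa p.1 p.2)
    (hfbc : Continuous fun p : ℝ × ℝ => fb p.1 p.2) (ρ : ℝ) :
    Continuous fun t => convK fa fb t ρ := by
  have hcont : Continuous fun x => ∫ s, fb s ρ * fa x s :=
    Differentiable.continuous fun t =>
      (hasDerivAt_param (F := fun a b => fa b a) (swap_contDiff hfa) (swap_hcs hfas)
        (sect1_cont hfbc ρ) t).differentiableAt
  have he : (fun t => convK fa fb t ρ) = fun x => ∫ s, fb s ρ * fa x s := by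
    funext t
    show (∫ s, fa t s * fb s ρ) = _
    congr 1
    funext s
    ring
  rw [he]
  exact hcont

lemma deriv2_mul {b l : ℝ → ℝ} (hb : ContDiff ℝ 2 b) (hl : ContDiff ℝ 2 l) (ρ : ℝ) :
    HasDerivAt (fun r => deriv (fun x => b x * l x) r)
      (deriv (deriv b) ρ * l ρ + 2 * (deriv b ρ * deriv l ρ) + b ρ * deriv (deriv l) ρ) ρ := by
  have hbd := hb.differentiable two_ne_zero
  have hld := hl.differentiable two_ne_zero
  have he : (fun r => deriv (fun x => b x * l x) r) = fun r => deriv b r * l r + b r * deriv l r :=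
    funext fun r => deriv_mul (hbd r) (hld r)
  rw [he]
  have h1 : HasDerivAt (deriv b) (deriv (deriv b) ρ) ρ :=
    ((contDiff_one_deriv hb).differentiable one_ne_zero ρ).hasDerivAt
  have h2 : HasDerivAt (deriv l) (deriv (deriv l) ρ) ρ :=
    ((contDiff_one_deriv hl).differentiable one_ne_zero ρ).hasDerivAt
  have h := (h1.fun_mul (hld ρ).hasDerivAt).fun_add ((hbd ρ).hasDerivAt.fun_mul h2)
  exact h.congr_deriv (by ring)

lemma convL_astar (hℓ : ContDiff ℝ 2 ℓ) (hℓs : HasCompactSupport ℓ)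
    (hba : ContDiff ℝ 2 ba)
    (hfa : ContDiff ℝ 2 fun p : ℝ × ℝ => fa p.1 p.2)
    (hfas : HasCompactSupport fun p : ℝ × ℝ => fa p.1 p.2)
    (hfat : ∀ rm rp, rp < rm → fa rm rp = 0)
    (hfb : ContDiff ℝ 2 fun p : ℝ × ℝ => fb p.1 p.2)
    (hfbs : HasCompactSupport fun p : ℝ × ℝ => fb p.1 p.2) (ρ : ℝ) :
    ∫ s, Astar ba fa ℓ s * fb s ρ
      = (∫ t, ℓ t * convK fa fb t ρ) - (∫ s, ℓ s * (Aop fa s * fb s ρ))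
        + ∫ s, (ba s * ℓ s) * pd1 fb s ρ := by
  have hfa1 := hfa.of_le one_le_two
  have hfb1 := hfb.of_le one_le_two
  have hℓc := hℓ.continuous
  have hCc : Continuous fun r => ∫ t, ℓ t * fa t r := convL_cont hℓc hfa1 hfas
  have hAc : Continuous (Aop fa) := Aop_cont hfa1 hfas hfat
  have hbℓ : ContDiff ℝ 2 fun s => ba s * ℓ s := hba.mul hℓ
  have hbℓs : HasCompactSupport fun s => ba s * ℓ s := hℓs.mul_left
  have hfbsc : Continuous fun s => fb s ρ := sect1_cont hfb1.continuous ρ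
  have hfbss : HasCompactSupport fun s => fb s ρ := sect1_hcs hfbs ρ
  have i1 : Integrable (fun s => (∫ t, ℓ t * fa t s) * fb s ρ) volume :=
    ((hCc.mul hfbsc).integrable_of_hasCompactSupport hfbss.mul_left)
  have i2 : Integrable (fun s => Aop fa s * ℓ s * fb s ρ) volume :=
    (((hAc.mul hℓc).mul hfbsc).integrable_of_hasCompactSupport hfbss.mul_left)
  have i3 : Integrable (fun s => deriv (fun x => ba x * ℓ x) s * fb s ρ) volume :=
    (((hbℓ.continuous_deriv one_le_two).mul hfbsc).integrable_of_hasCompactSupport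
      hfbss.mul_left)
  have he : (fun s => Astar ba fa ℓ s * fb s ρ)
      = fun s => (∫ t, ℓ t * fa t s) * fb s ρ - Aop fa s * ℓ s * fb s ρ
          - deriv (fun x => ba x * ℓ x) s * fb s ρ := by
    funext s
    show ((∫ t, ℓ t * fa t s) - Aop fa s * ℓ s - deriv (fun x => ba x * ℓ x) s) * fb s ρ = _
    ring
  have i12 : Integrable (fun s => (∫ t, ℓ t * fa t s) * fb s ρ - Aop fa s * ℓ s * fb s ρ)
      volume := i1.sub i2
  rw [he, integral_sub i12 i3, integral_sub i1 i2]
  rw [fubini_conv hfa1.continuous hfas hfb1.continuous hℓc ρ]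
  rw [ibp (hbℓ.of_le one_le_two) hbℓs hfb1 hfbs ρ]
  have e2 : (fun s => Aop fa s * ℓ s * fb s ρ) = fun s => ℓ s * (Aop fa s * fb s ρ) := by
    funext s; ring
  rw [e2]
  ring

lemma astar_comp (hℓ : ContDiff ℝ 2 ℓ) (hℓs : HasCompactSupport ℓ)
    (hba : ContDiff ℝ 2 ba) (hbb : ContDiff ℝ 2 bb)
    (hfa : ContDiff ℝ 2 fun p : ℝ × ℝ => fa p.1 p.2)
    (hfas : HasCompactSupport fun p : ℝ × ℝ => fa p.1 p.2)
    (hfat : ∀ rm rp, rp < rm → fa rm rp = 0)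
    (hfb : ContDiff ℝ 2 fun p : ℝ × ℝ => fb p.1 p.2)
    (hfbs : HasCompactSupport fun p : ℝ × ℝ => fb p.1 p.2)
    (hfbt : ∀ rm rp, rp < rm → fb rm rp = 0) (ρ : ℝ) :
    Astar bb fb (fun r => Astar ba fa ℓ r) ρ
      = ((∫ t, ℓ t * convK fa fb t ρ) - (∫ s, ℓ s * (Aop fa s * fb s ρ))
          + ∫ s, (ba s * ℓ s) * pd1 fb s ρ)
        - Aop fb ρ * ((∫ s, ℓ s * fa s ρ) - Aop fa ρ * ℓ ρ
            - (deriv ba ρ * ℓ ρ + ba ρ * deriv ℓ ρ))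
        - (deriv bb ρ * ((∫ s, ℓ s * fa s ρ) - Aop fa ρ * ℓ ρ
            - (deriv ba ρ * ℓ ρ + ba ρ * deriv ℓ ρ))
          + bb ρ * ((∫ s, ℓ s * pd2 fa s ρ)
            - ((∫ s, pd1 fa ρ s) * ℓ ρ + Aop fa ρ * deriv ℓ ρ)
            - (deriv (deriv ba) ρ * ℓ ρ + 2 * (deriv ba ρ * deriv ℓ ρ)
                + ba ρ * deriv (deriv ℓ) ρ))) := by
  have hfa1 := hfa.of_le one_le_two
  have hℓc := hℓ.continuous
  have hinner_val : Astar ba fa ℓ ρ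
      = (∫ s, ℓ s * fa s ρ) - Aop fa ρ * ℓ ρ - (deriv ba ρ * ℓ ρ + ba ρ * deriv ℓ ρ) := by
    show (∫ s, ℓ s * fa s ρ) - Aop fa ρ * ℓ ρ - deriv (fun r => ba r * ℓ r) ρ = _
    rw [deriv_fun_mul (hba.differentiable two_ne_zero ρ) (hℓ.differentiable two_ne_zero ρ)]
  have hinner_deriv : HasDerivAt (fun r => Astar ba fa ℓ r)
      ((∫ s, ℓ s * pd2 fa s ρ)
        - ((∫ s, pd1 fa ρ s) * ℓ ρ + Aop fa ρ * deriv ℓ ρ)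
        - (deriv (deriv ba) ρ * ℓ ρ + 2 * (deriv ba ρ * deriv ℓ ρ)
            + ba ρ * deriv (deriv ℓ) ρ)) ρ := by
    have h1 := hasDerivAt_convL hℓc hfa1 hfas ρ
    have h2 := (hasDerivAt_Aop hfa1 hfas hfat ρ).mul
      (hℓ.differentiable two_ne_zero ρ).hasDerivAt
    have h3 := deriv2_mul hba hℓ ρ
    exact (h1.sub h2).sub h3
  have hd : deriv (fun r => bb r * Astar ba fa ℓ r) ρ
      = deriv bb ρ * Astar ba fa ℓ ρ
        + bb ρ * ((∫ s, ℓ s * pd2 fa s ρ)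
            - ((∫ s, pd1 fa ρ s) * ℓ ρ + Aop fa ρ * deriv ℓ ρ)
            - (deriv (deriv ba) ρ * ℓ ρ + 2 * (deriv ba ρ * deriv ℓ ρ)
                + ba ρ * deriv (deriv ℓ) ρ)) :=
    ((hbb.differentiable two_ne_zero ρ).hasDerivAt.mul hinner_deriv).deriv
  show (∫ s, Astar ba fa ℓ s * fb s ρ) - Aop fb ρ * Astar ba fa ℓ ρ
      - deriv (fun r => bb r * Astar ba fa ℓ r) ρ = _
  rw [hd, hinner_val, convL_astar hℓ hℓs hba hfa hfas hfat hfb hfbs ρ]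

lemma q_pointwise (hbb : ContDiff ℝ 2 bb)
    (hfa : ContDiff ℝ 1 fun p : ℝ × ℝ => fa p.1 p.2) (s ρ : ℝ) :
    ℓ s * Qop ba fa bb fb s ρ
      = ℓ s * convK fa fb s ρ - ℓ s * (Aop fa s * fb s ρ) - ℓ s * fa s ρ * Aop fb ρ
        + (ba s * ℓ s) * pd1 fb s ρ
        - (ℓ s * pd2 fa s ρ * bb ρ + ℓ s * fa s ρ * deriv bb ρ) := by
  have hd : deriv (fun r => fa s r * bb r) ρ = pd2 fa s ρ * bb ρ + fa s ρ * deriv bb ρ :=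
    ((sect2_hasDerivAt hfa s ρ).mul (hbb.differentiable two_ne_zero ρ).hasDerivAt).deriv
  simp only [Qop, pd1, pd2] at *
  rw [hd]
  ring

lemma q_integrable (hℓ : ContDiff ℝ 2 ℓ) (hℓs : HasCompactSupport ℓ)
    (hba : ContDiff ℝ 2 ba) (hbb : ContDiff ℝ 2 bb)
    (hfa : ContDiff ℝ 2 fun p : ℝ × ℝ => fa p.1 p.2)
    (hfas : HasCompactSupport fun p : ℝ × ℝ => fa p.1 p.2)
    (hfat : ∀ rm rp, rp < rm → fa rm rp = 0)
    (hfb : ContDiff ℝ 2 fun p : ℝ × ℝ => fb p.1 p.2)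
    (hfbs : HasCompactSupport fun p : ℝ × ℝ => fb p.1 p.2)
    (hfbt : ∀ rm rp, rp < rm → fb rm rp = 0) (ρ : ℝ) :
    Integrable (fun s => ℓ s * Qop ba fa bb fb s ρ) volume := by
  have hfa1 := hfa.of_le one_le_two
  have hfb1 := hfb.of_le one_le_two
  have hℓc := hℓ.continuous
  have hAc : Continuous (Aop fa) := Aop_cont hfa1 hfas hfat
  have hAbc : Continuous (Aop fb) := Aop_cont hfb1 hfbs hfbt
  have hfbsc : Continuous fun s => fb s ρ := sect1_cont hfb1.continuous ρ
  have hfasc : Continuous fun s => fa s ρ := sect1_cont hfa1.continuous ρ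
  have he : (fun s => ℓ s * Qop ba fa bb fb s ρ)
      = fun s => ℓ s * convK fa fb s ρ - ℓ s * (Aop fa s * fb s ρ) - ℓ s * fa s ρ * Aop fb ρ
          + (ba s * ℓ s) * pd1 fb s ρ
          - (ℓ s * pd2 fa s ρ * bb ρ + ℓ s * fa s ρ * deriv bb ρ) :=
    funext fun s => q_pointwise hbb hfa1 s ρ
  rw [he]
  have i1 : Integrable (fun s => ℓ s * convK fa fb s ρ) volume :=
    (hℓc.mul (convK_cont hfa1 hfas hfb1.continuous ρ)).integrable_of_hasCompactSupport
      hℓs.mul_right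
  have i2 : Integrable (fun s => ℓ s * (Aop fa s * fb s ρ)) volume :=
    (hℓc.mul (hAc.mul hfbsc)).integrable_of_hasCompactSupport hℓs.mul_right
  have i3 : Integrable (fun s => ℓ s * fa s ρ * Aop fb ρ) volume :=
    ((hℓc.mul hfasc).mul continuous_const).integrable_of_hasCompactSupport
      hℓs.mul_right.mul_right
  have i4 : Integrable (fun s => (ba s * ℓ s) * pd1 fb s ρ) volume :=
    ((hba.continuous.mul hℓc).mul (sect1_cont (pd1_cont hfb1) ρ)).integrable_of_hasCompactSupport
      (HasCompactSupport.mul_right hℓs.mul_left)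
  have i5a : Integrable (fun s => ℓ s * pd2 fa s ρ * bb ρ) volume :=
    ((hℓc.mul (sect1_cont (pd2_cont hfa1) ρ)).mul continuous_const).integrable_of_hasCompactSupport
      hℓs.mul_right.mul_right
  have i5b : Integrable (fun s => ℓ s * fa s ρ * deriv bb ρ) volume :=
    ((hℓc.mul hfasc).mul continuous_const).integrable_of_hasCompactSupport
      hℓs.mul_right.mul_right
  exact (((i1.sub i2).sub i3).add i4).sub (i5a.add i5b)

lemma q_integral (hℓ : ContDiff ℝ 2 ℓ) (hℓs : HasCompactSupport ℓ)
    (hba : ContDiff ℝ 2 ba) (hbb : ContDiff ℝ 2 bb)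
    (hfa : ContDiff ℝ 2 fun p : ℝ × ℝ => fa p.1 p.2)
    (hfas : HasCompactSupport fun p : ℝ × ℝ => fa p.1 p.2)
    (hfat : ∀ rm rp, rp < rm → fa rm rp = 0)
    (hfb : ContDiff ℝ 2 fun p : ℝ × ℝ => fb p.1 p.2)
    (hfbs : HasCompactSupport fun p : ℝ × ℝ => fb p.1 p.2)
    (hfbt : ∀ rm rp, rp < rm → fb rm rp = 0) (ρ : ℝ) :
    ∫ s, ℓ s * Qop ba fa bb fb s ρ
      = (∫ t, ℓ t * convK fa fb t ρ) - (∫ s, ℓ s * (Aop fa s * fb s ρ))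
        - (∫ s, ℓ s * fa s ρ) * Aop fb ρ + (∫ s, (ba s * ℓ s) * pd1 fb s ρ)
        - ((∫ s, ℓ s * pd2 fa s ρ) * bb ρ + (∫ s, ℓ s * fa s ρ) * deriv bb ρ) := by
  have hfa1 := hfa.of_le one_le_two
  have hfb1 := hfb.of_le one_le_two
  have hℓc := hℓ.continuous
  have hAc : Continuous (Aop fa) := Aop_cont hfa1 hfas hfat
  have hfbsc : Continuous fun s => fb s ρ := sect1_cont hfb1.continuous ρ
  have hfasc : Continuous fun s => fa s ρ := sect1_cont hfa1.continuous ρ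
  have i1 : Integrable (fun s => ℓ s * convK fa fb s ρ) volume :=
    (hℓc.mul (convK_cont hfa1 hfas hfb1.continuous ρ)).integrable_of_hasCompactSupport
      hℓs.mul_right
  have i2 : Integrable (fun s => ℓ s * (Aop fa s * fb s ρ)) volume :=
    (hℓc.mul (hAc.mul hfbsc)).integrable_of_hasCompactSupport hℓs.mul_right
  have i3 : Integrable (fun s => ℓ s * fa s ρ * Aop fb ρ) volume :=
    ((hℓc.mul hfasc).mul continuous_const).integrable_of_hasCompactSupport
      hℓs.mul_right.mul_right
  have i4 : Integrable (fun s => (ba s * ℓ s) * pd1 fb s ρ) volume :=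
    ((hba.continuous.mul hℓc).mul (sect1_cont (pd1_cont hfb1) ρ)).integrable_of_hasCompactSupport
      (HasCompactSupport.mul_right hℓs.mul_left)
  have i5a : Integrable (fun s => ℓ s * pd2 fa s ρ * bb ρ) volume :=
    ((hℓc.mul (sect1_cont (pd2_cont hfa1) ρ)).mul continuous_const).integrable_of_hasCompactSupport
      hℓs.mul_right.mul_right
  have i5b : Integrable (fun s => ℓ s * fa s ρ * deriv bb ρ) volume :=
    ((hℓc.mul hfasc).mul continuous_const).integrable_of_hasCompactSupport
      hℓs.mul_right.mul_right
  have he : (fun s => ℓ s * Qop ba fa bb fb s ρ)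
      = fun s => ℓ s * convK fa fb s ρ - ℓ s * (Aop fa s * fb s ρ) - ℓ s * fa s ρ * Aop fb ρ
          + (ba s * ℓ s) * pd1 fb s ρ
          - (ℓ s * pd2 fa s ρ * bb ρ + ℓ s * fa s ρ * deriv bb ρ) :=
    funext fun s => q_pointwise hbb hfa1 s ρ
  have iA : Integrable (fun s => ℓ s * convK fa fb s ρ - ℓ s * (Aop fa s * fb s ρ))
      volume := i1.sub i2
  have iB : Integrable (fun s => ℓ s * convK fa fb s ρ - ℓ s * (Aop fa s * fb s ρ)
      - ℓ s * fa s ρ * Aop fb ρ) volume := iA.sub i3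
  have iC : Integrable (fun s => ℓ s * convK fa fb s ρ - ℓ s * (Aop fa s * fb s ρ)
      - ℓ s * fa s ρ * Aop fb ρ + (ba s * ℓ s) * pd1 fb s ρ) volume := iB.add i4
  have iD : Integrable (fun s => ℓ s * pd2 fa s ρ * bb ρ + ℓ s * fa s ρ * deriv bb ρ)
      volume := i5a.add i5b
  rw [he, integral_sub iC iD, integral_add iB i4, integral_sub iA i3,
    integral_sub i1 i2, integral_add i5a i5b, integral_mul_const, integral_mul_const,
    integral_mul_const]

end Master

end Stmt15Aux

open Stmt15Aux in
/-- The commutator identity (Subsection 1.4):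
`A^{1*}A^{2*}ℓ − A^{2*}A^{1*}ℓ = ℓ∗[Q(f²,f¹) − Q(f¹,f²)]
  + [(b¹b²_ρ − b²b¹_ρ)ℓ]_ρ + ℓ·[A(f²)_ρ b¹ − A(f¹)_ρ b²]`. -/
theorem stmt15
    (b1 b2 : ℝ → ℝ) (f1 f2 : ℝ → ℝ → ℝ)
    (hb1 : ContDiff ℝ 2 b1) (hb2 : ContDiff ℝ 2 b2)
    (hf1 : ContDiff ℝ 2 (fun p : ℝ × ℝ => f1 p.1 p.2))
    (hf2 : ContDiff ℝ 2 (fun p : ℝ × ℝ => f2 p.1 p.2))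
    (hf1supp : HasCompactSupport (fun p : ℝ × ℝ => f1 p.1 p.2))
    (hf2supp : HasCompactSupport (fun p : ℝ × ℝ => f2 p.1 p.2))
    (hf1tri : ∀ rm rp, rp < rm → f1 rm rp = 0)
    (hf2tri : ∀ rm rp, rp < rm → f2 rm rp = 0)
    (ℓ : ℝ → ℝ) (hℓ : ContDiff ℝ 2 ℓ) (hℓsupp : HasCompactSupport ℓ) :
    ∀ ρ : ℝ,
      Astar b1 f1 (fun r => Astar b2 f2 ℓ r) ρ
          - Astar b2 f2 (fun r => Astar b1 f1 ℓ r) ρ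
        = convL ℓ (fun rm rp => Qop b2 f2 b1 f1 rm rp - Qop b1 f1 b2 f2 rm rp) ρ
          + deriv (fun r => (b1 r * deriv b2 r - b2 r * deriv b1 r) * ℓ r) ρ
          + ℓ ρ * (deriv (fun r => Aop f2 r) ρ * b1 ρ
            - deriv (fun r => Aop f1 r) ρ * b2 ρ) := by
  intro ρ
  have hL1 := astar_comp (ba := b2) (bb := b1) (fa := f2) (fb := f1)
    hℓ hℓsupp hb2 hb1 hf2 hf2supp hf2tri hf1 hf1supp hf1tri ρ
  have hL2 := astar_comp (ba := b1) (bb := b2) (fa := f1) (fb := f2)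
    hℓ hℓsupp hb1 hb2 hf1 hf1supp hf1tri hf2 hf2supp hf2tri ρ
  have hq1 := q_integral (ba := b2) (bb := b1) (fa := f2) (fb := f1)
    hℓ hℓsupp hb2 hb1 hf2 hf2supp hf2tri hf1 hf1supp hf1tri ρ
  have hq2 := q_integral (ba := b1) (bb := b2) (fa := f1) (fb := f2)
    hℓ hℓsupp hb1 hb2 hf1 hf1supp hf1tri hf2 hf2supp hf2tri ρ
  have hqi1 := q_integrable (ba := b2) (bb := b1) (fa := f2) (fb := f1)
    hℓ hℓsupp hb2 hb1 hf2 hf2supp hf2tri hf1 hf1supp hf1tri ρ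
  have hqi2 := q_integrable (ba := b1) (bb := b2) (fa := f1) (fb := f2)
    hℓ hℓsupp hb1 hb2 hf1 hf1supp hf1tri hf2 hf2supp hf2tri ρ
  have hRconv : convL ℓ (fun rm rp => Qop b2 f2 b1 f1 rm rp - Qop b1 f1 b2 f2 rm rp) ρ
      = (∫ s, ℓ s * Qop b2 f2 b1 f1 s ρ) - ∫ s, ℓ s * Qop b1 f1 b2 f2 s ρ := by
    have he : (fun s => ℓ s * (Qop b2 f2 b1 f1 s ρ - Qop b1 f1 b2 f2 s ρ))
        = fun s => ℓ s * Qop b2 f2 b1 f1 s ρ - ℓ s * Qop b1 f1 b2 f2 s ρ :=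
      funext fun s => by ring
    show (∫ s, ℓ s * (Qop b2 f2 b1 f1 s ρ - Qop b1 f1 b2 f2 s ρ)) = _
    rw [he, integral_sub hqi1 hqi2]
  have hder : deriv (fun r => (b1 r * deriv b2 r - b2 r * deriv b1 r) * ℓ r) ρ
      = (deriv b1 ρ * deriv b2 ρ + b1 ρ * deriv (deriv b2) ρ
          - (deriv b2 ρ * deriv b1 ρ + b2 ρ * deriv (deriv b1) ρ)) * ℓ ρ
        + (b1 ρ * deriv b2 ρ - b2 ρ * deriv b1 ρ) * deriv ℓ ρ := by
    have h1 : HasDerivAt (fun r => b1 r * deriv b2 r - b2 r * deriv b1 r)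
        (deriv b1 ρ * deriv b2 ρ + b1 ρ * deriv (deriv b2) ρ
          - (deriv b2 ρ * deriv b1 ρ + b2 ρ * deriv (deriv b1) ρ)) ρ :=
      ((hb1.differentiable two_ne_zero ρ).hasDerivAt.mul
          ((contDiff_one_deriv hb2).differentiable one_ne_zero ρ).hasDerivAt).sub
        ((hb2.differentiable two_ne_zero ρ).hasDerivAt.mul
          ((contDiff_one_deriv hb1).differentiable one_ne_zero ρ).hasDerivAt)
    exact (h1.mul (hℓ.differentiable two_ne_zero ρ).hasDerivAt).deriv
  have hA2' : deriv (fun r => Aop f2 r) ρ = ∫ s, pd1 f2 ρ s :=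
    (hasDerivAt_Aop (hf2.of_le one_le_two) hf2supp hf2tri ρ).deriv
  have hA1' : deriv (fun r => Aop f1 r) ρ = ∫ s, pd1 f1 ρ s :=
    (hasDerivAt_Aop (hf1.of_le one_le_two) hf1supp hf1tri ρ).deriv
  rw [hL1, hL2, hRconv, hq1, hq2, hder, hA2', hA1']
  ring
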